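/- Let (X,d) be a compact metric space and let (X, f_{1,∞}) be a non-autonomous discrete system such that f_{1,∞} is feeble open, each f_n is surjective, (f_n) converges uniformly to a continuous map f : X → X, and the compositions (f_r^k) converge collectively to (f^k). If f_{1,∞} is totally transitive and has dense periodic points, then f_{1,∞} is weakly mixing. -/

import Mathlib

open Set Filter

/-- `nds f i n` is the `n`-step composition `f_i^n = f (i+n-1) ∘ ⋯ ∘ f i`, with `nds f i 0 = id`. -/
def nds {X : Type*} (f : ℕ → X → X) (i : ℕ) : ℕ → X → X
  | 0 => id
  | n + 1 => f (i + n) ∘ nds f i n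

section TopDefs

variable {X : Type*} [TopologicalSpace X]

/-- The NDS `f_{1,∞}` is (topologically) transitive. -/
def NDSTransitive (f : ℕ → X → X) : Prop :=
  ∀ U V : Set X, IsOpen U → U.Nonempty → IsOpen V → V.Nonempty →
    ∃ n : ℕ, 0 < n ∧ (nds f 1 n '' U ∩ V).Nonempty

/-- The NDS `f_{1,∞}` is mixing. -/
def NDSMixing (f : ℕ → X → X) : Prop :=
  ∀ U V : Set X, IsOpen U → U.Nonempty → IsOpen V → V.Nonempty →
    ∃ N : ℕ, ∀ n : ℕ, N ≤ n → (nds f 1 n '' U ∩ V).Nonempty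

/-- The NDS `f_{1,∞}` is weakly mixing. -/
def NDSWeaklyMixing (f : ℕ → X → X) : Prop :=
  ∀ U₁ U₂ V₁ V₂ : Set X, IsOpen U₁ → U₁.Nonempty → IsOpen U₂ → U₂.Nonempty →
    IsOpen V₁ → V₁.Nonempty → IsOpen V₂ → V₂.Nonempty →
    ∃ n : ℕ, 0 < n ∧ (nds f 1 n '' U₁ ∩ V₁).Nonempty ∧ (nds f 1 n '' U₂ ∩ V₂).Nonempty

/-- The NDS `f_{1,∞}` is multi-transitive. -/
def NDSMultiTransitive (f : ℕ → X → X) : Prop :=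
  ∀ m : ℕ, 0 < m → ∀ U V : Fin m → Set X,
    (∀ j, IsOpen (U j)) → (∀ j, (U j).Nonempty) →
    (∀ j, IsOpen (V j)) → (∀ j, (V j).Nonempty) →
    ∃ l : ℕ, 0 < l ∧ ∀ j : Fin m, (nds f 1 (l * (j.1 + 1)) '' U j ∩ V j).Nonempty

/-- The NDS `f_{1,∞}` is totally transitive. -/
def NDSTotallyTransitive (f : ℕ → X → X) : Prop :=
  ∀ k : ℕ, 0 < k → ∀ U V : Set X, IsOpen U → U.Nonempty → IsOpen V → V.Nonempty →
    ∃ n : ℕ, 0 < n ∧ (nds f 1 (n * k) '' U ∩ V).Nonempty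

/-- The NDS `f_{1,∞}` is minimal: every orbit is dense. -/
def NDSMinimal (f : ℕ → X → X) : Prop :=
  ∀ x : X, Dense (Set.range fun n : ℕ => nds f 1 n x)

/-- The NDS `f_{1,∞}` is feeble open. -/
def FeebleOpen (f : ℕ → X → X) : Prop :=
  ∀ i : ℕ, 1 ≤ i → ∀ U : Set X, IsOpen U → U.Nonempty → (interior (f i '' U)).Nonempty

/-- A set of positive integers is syndetic (has bounded gaps). -/
def SyndeticSet (A : Set ℕ) : Prop :=
  ∃ M : ℕ, ∀ i : ℕ, 1 ≤ i → ∃ j ∈ A, i ≤ j ∧ j ≤ i + M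

/-- A set of positive integers is thick (contains arbitrarily long runs). -/
def ThickSet (A : Set ℕ) : Prop :=
  ∀ p : ℕ, ∃ n : ℕ, ∀ j : ℕ, n ≤ j → j ≤ n + p → j ∈ A

/-- The NDS `f_{1,∞}` is syndetically transitive. -/
def NDSSyndeticallyTransitive (f : ℕ → X → X) : Prop :=
  ∀ U V : Set X, IsOpen U → U.Nonempty → IsOpen V → V.Nonempty →
    SyndeticSet {n : ℕ | 0 < n ∧ (nds f 1 n '' U ∩ V).Nonempty}

/-- The NDS `f_{1,∞}` has dense periodic points. -/
def NDSDensePeriodicPoints (f : ℕ → X → X) : Prop :=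
  Dense {x : X | ∃ k : ℕ, 0 < k ∧ ∀ n : ℕ, 0 < n → nds f 1 (k * n) x = x}

/-- The NDS `f_{k,∞}` is strongly transitive. -/
def NDSStronglyTransitiveFrom (f : ℕ → X → X) (k : ℕ) : Prop :=
  ∀ U : Set X, IsOpen U → U.Nonempty →
    ∃ M : ℕ, 0 < M ∧ (⋃ i ∈ Set.Icc 1 M, nds f k i '' U) = Set.univ

/-- An autonomous map is transitive. -/
def MapTransitive {Y : Type*} [TopologicalSpace Y] (g : Y → Y) : Prop :=
  ∀ U V : Set Y, IsOpen U → U.Nonempty → IsOpen V → V.Nonempty →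
    ∃ n : ℕ, 0 < n ∧ (g^[n] '' U ∩ V).Nonempty

/-- An autonomous map is weakly mixing. -/
def MapWeaklyMixing {Y : Type*} [TopologicalSpace Y] (g : Y → Y) : Prop :=
  ∀ U₁ U₂ V₁ V₂ : Set Y, IsOpen U₁ → U₁.Nonempty → IsOpen U₂ → U₂.Nonempty →
    IsOpen V₁ → V₁.Nonempty → IsOpen V₂ → V₂.Nonempty →
    ∃ n : ℕ, 0 < n ∧ (g^[n] '' U₁ ∩ V₁).Nonempty ∧ (g^[n] '' U₂ ∩ V₂).Nonempty

/-- An autonomous map is totally transitive. -/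
def MapTotallyTransitive {Y : Type*} [TopologicalSpace Y] (g : Y → Y) : Prop :=
  ∀ k : ℕ, 0 < k → ∀ U V : Set Y, IsOpen U → U.Nonempty → IsOpen V → V.Nonempty →
    ∃ n : ℕ, 0 < n ∧ (g^[n * k] '' U ∩ V).Nonempty

/-- An autonomous map is syndetically transitive. -/
def MapSyndeticallyTransitive {Y : Type*} [TopologicalSpace Y] (g : Y → Y) : Prop :=
  ∀ U V : Set Y, IsOpen U → U.Nonempty → IsOpen V → V.Nonempty →
    SyndeticSet {n : ℕ | 0 < n ∧ (g^[n] '' U ∩ V).Nonempty}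

/-- An autonomous map is minimal. -/
def MapMinimal {Y : Type*} [TopologicalSpace Y] (g : Y → Y) : Prop :=
  ∀ x : Y, Dense (Set.range fun n : ℕ => g^[n] x)

end TopDefs

section MetricDefs

variable {X : Type*} [MetricSpace X]

/-- The compositions `(f_r^k)` converge collectively to `(f^k)` (w.r.t. the supremum metric). -/
def CollectivelyConverges (f : ℕ → X → X) (g : X → X) : Prop :=
  ∀ ε : ℝ, 0 < ε → ∃ r₀ : ℕ, ∀ r : ℕ, r₀ ≤ r → ∀ k : ℕ, 1 ≤ k → ∀ x : X,
    dist (nds f r k x) (g^[k] x) < ε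

/-- `N(U, δ)`: the times at which the NDS is `δ`-sensitive on `U`. -/
def SensSet (f : ℕ → X → X) (U : Set X) (δ : ℝ) : Set ℕ :=
  {n : ℕ | 0 < n ∧ ∃ x ∈ U, ∃ y ∈ U, δ < dist (nds f 1 n x) (nds f 1 n y)}

/-- The NDS `f_{1,∞}` is multi-sensitive. -/
def NDSMultiSensitive (f : ℕ → X → X) : Prop :=
  ∃ δ : ℝ, 0 < δ ∧ ∀ m : ℕ, 0 < m → ∀ U : Fin m → Set X,
    (∀ i, IsOpen (U i)) → (∀ i, (U i).Nonempty) → (⋂ i, SensSet f (U i) δ).Nonempty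

/-- The NDS `f_{1,∞}` is thickly sensitive. -/
def NDSThicklySensitive (f : ℕ → X → X) : Prop :=
  ∃ δ : ℝ, 0 < δ ∧ ∀ U : Set X, IsOpen U → U.Nonempty → ThickSet (SensSet f U δ)

/-- The NDS `f_{1,∞}` is syndetically sensitive. -/
def NDSSyndeticallySensitive (f : ℕ → X → X) : Prop :=
  ∃ δ : ℝ, 0 < δ ∧ ∀ U : Set X, IsOpen U → U.Nonempty → SyndeticSet (SensSet f U δ)

/-- The NDS `f_{1,∞}` is mildly mixing: its product with every transitive NDS on a compact
metric space is transitive. -/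
def NDSMildlyMixing (f : ℕ → X → X) : Prop :=
  ∀ (Y : Type*) [MetricSpace Y] [CompactSpace Y] (g : ℕ → Y → Y),
    (∀ n : ℕ, 1 ≤ n → Continuous (g n)) → NDSTransitive g →
    NDSTransitive (fun n (p : X × Y) => (f n p.1, g n p.2))

/-- The NDS `f_{1,∞}` is Li–Yorke chaotic. -/
def LiYorkeChaotic (f : ℕ → X → X) : Prop :=
  ∃ S : Set X, ¬S.Countable ∧ ∀ x ∈ S, ∀ y ∈ S, x ≠ y →
    Filter.liminf (fun n : ℕ => dist (nds f 1 n x) (nds f 1 n y)) Filter.atTop = 0 ∧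
    0 < Filter.limsup (fun n : ℕ => dist (nds f 1 n x) (nds f 1 n y)) Filter.atTop

end MetricDefs

lemma nds_succ {X : Type*} (f : ℕ → X → X) (i n : ℕ) :
    nds f i (n + 1) = f (i + n) ∘ nds f i n := rfl

lemma nds_add {X : Type*} (f : ℕ → X → X) (i m n : ℕ) :
    nds f i (m + n) = nds f (i + m) n ∘ nds f i m := by
  induction n with
  | zero => rfl
  | succ n ih =>
    show nds f i ((m + n) + 1) = _
    rw [nds_succ, ih]
    have h : i + (m + n) = (i + m) + n := by omega
    rw [h]
    rfl

lemma nds_continuous {X : Type*} [TopologicalSpace X] {f : ℕ → X → X}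
    (h : ∀ n : ℕ, 1 ≤ n → Continuous (f n)) {i : ℕ} (hi : 1 ≤ i) (n : ℕ) :
    Continuous (nds f i n) := by
  induction n with
  | zero => exact continuous_id
  | succ n ih => exact (h (i + n) (by omega)).comp ih

lemma nds_surjective {X : Type*} {f : ℕ → X → X}
    (h : ∀ n : ℕ, 1 ≤ n → Function.Surjective (f n)) {i : ℕ} (hi : 1 ≤ i) (n : ℕ) :
    Function.Surjective (nds f i n) := by
  induction n with
  | zero => exact Function.surjective_id
  | succ n ih => exact (h (i + n) (by omega)).comp ih




lemma nds_feeble {X : Type*} [TopologicalSpace X] {f : ℕ → X → X}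
    (hfo : FeebleOpen f) (r : ℕ) (U : Set X) (hUo : IsOpen U) (hU : U.Nonempty) :
    (interior (nds f 1 r '' U)).Nonempty := by
  induction r with
  | zero => simpa [nds, hUo.interior_eq] using hU
  | succ r ih =>
    have h1 : (interior (f (1 + r) '' interior (nds f 1 r '' U))).Nonempty :=
      hfo (1 + r) (by omega) _ isOpen_interior ih
    have h2 : f (1 + r) '' interior (nds f 1 r '' U) ⊆ nds f 1 (r + 1) '' U := by
      rw [nds_succ, Set.image_comp]
      exact Set.image_mono interior_subset
    exact h1.mono (interior_mono h2)

/-- Periodic points of the NDS are periodic for the limit map `F`. -/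
lemma periodic_transfer {X : Type*} [MetricSpace X] {f : ℕ → X → X} {F : X → X}
    (hcoll : CollectivelyConverges f F) {x : X} {k : ℕ} (hk : 0 < k)
    (hx : ∀ n : ℕ, 0 < n → nds f 1 (k * n) x = x) (j : ℕ) (hj : 1 ≤ j) :
    F^[k * j] x = x := by
  by_contra hne
  have hd : 0 < dist x (F^[k * j] x) := by
    rw [dist_pos]; exact fun h => hne h.symm
  obtain ⟨r₀, hr₀⟩ := hcoll _ hd
  set n : ℕ := r₀ + 1 with hn
  have htail : nds f (1 + k * n) (k * j) x = x := by
    have hsplit : nds f 1 (k * n + k * j) x = nds f (1 + k * n) (k * j) (nds f 1 (k * n) x) := by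
      rw [nds_add]; rfl
    have h1 : nds f 1 (k * n) x = x := hx n (by omega)
    have h2 : nds f 1 (k * n + k * j) x = x := by
      have : k * n + k * j = k * (n + j) := by ring
      rw [this]; exact hx (n + j) (by omega)
    rw [h1, h2] at hsplit
    exact hsplit.symm
  have hlt := hr₀ (1 + k * n) (by have := Nat.le_mul_of_pos_left n hk; omega) (k * j)
      (Nat.mul_pos hk hj) x
  rw [htail] at hlt
  exact absurd hlt (not_lt.mpr le_rfl)

lemma F_surjective {X : Type*} [MetricSpace X] [CompactSpace X] {f : ℕ → X → X} {F : X → X}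
    (hsurj : ∀ n : ℕ, 1 ≤ n → Function.Surjective (f n)) (hF : Continuous F)
    (hcoll : CollectivelyConverges f F) : Function.Surjective F := by
  intro y
  have hclosed : IsClosed (Set.range F) := (isCompact_range hF).isClosed
  have hy : y ∈ closure (Set.range F) := by
    rw [Metric.mem_closure_iff]
    intro ε hε
    obtain ⟨r₀, hr₀⟩ := hcoll ε hε
    obtain ⟨x, hx⟩ := hsurj (r₀ + 1) (by omega) y
    refine ⟨F x, Set.mem_range_self x, ?_⟩
    have := hr₀ (r₀ + 1) (by omega) 1 le_rfl x
    simpa [nds, hx] using this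
  rw [hclosed.closure_eq] at hy
  exact hy

/-- The limit map `F` is totally transitive. -/
lemma F_totallyTransitive {X : Type*} [MetricSpace X] {f : ℕ → X → X} {F : X → X}
    (hcont : ∀ n : ℕ, 1 ≤ n → Continuous (f n))
    (hsurj : ∀ n : ℕ, 1 ≤ n → Function.Surjective (f n))
    (hcoll : CollectivelyConverges f F) (htt : NDSTotallyTransitive f)
    (k : ℕ) (hk : 0 < k) (A B : Set X) (hAo : IsOpen A) (hA : A.Nonempty)
    (hBo : IsOpen B) (hB : B.Nonempty) :
    ∃ m : ℕ, 0 < m ∧ (F^[m * k] '' A ∩ B).Nonempty := by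
  obtain ⟨b, hb⟩ := hB
  obtain ⟨ε, hε, hball⟩ := Metric.isOpen_iff.mp hBo b hb
  obtain ⟨r₀, hr₀⟩ := hcoll (ε / 2) (by positivity)
  set r : ℕ := k * (r₀ + 1) with hr
  have hrr₀ : r₀ + 1 ≤ r := Nat.le_mul_of_pos_left _ hk
  set U : Set X := (nds f 1 r) ⁻¹' A with hU
  have hUo : IsOpen U := (nds_continuous hcont le_rfl r).isOpen_preimage _ hAo
  have hUne : U.Nonempty := by
    obtain ⟨a, ha⟩ := hA
    obtain ⟨x, hx⟩ := nds_surjective hsurj le_rfl r a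
    exact ⟨x, by simpa [hU, hx] using ha⟩
  obtain ⟨n, hn, z, ⟨x, hxU, hxz⟩, hzb⟩ := htt (k * (r + 1)) (by positivity) U
    (Metric.ball b (ε / 2)) hUo hUne Metric.isOpen_ball ⟨b, Metric.mem_ball_self (by positivity)⟩
  set N : ℕ := n * (k * (r + 1)) with hN
  have hrN : r + 1 ≤ N := by
    calc r + 1 ≤ k * (r + 1) := Nat.le_mul_of_pos_left _ hk
    _ ≤ N := Nat.le_mul_of_pos_left _ hn
  set s : ℕ := N - r with hs
  have hNs : N = r + s := by omega
  have hks : k ∣ s := by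
    have h1 : k ∣ N := ⟨n * (r + 1), by ring⟩
    have h2 : k ∣ r := ⟨r₀ + 1, rfl⟩
    exact Nat.dvd_sub h1 h2
  obtain ⟨m, hm⟩ := hks
  have hmpos : 0 < m := by
    rcases Nat.eq_zero_or_pos m with h | h
    · subst h; simp at hm; omega
    · exact h
  set a : X := nds f 1 r x with ha
  have haA : a ∈ A := hxU
  have hsplit : nds f 1 N x = nds f (1 + r) s a := by
    rw [hNs, nds_add]; rfl
  have hclose : dist (nds f (1 + r) s a) (F^[s] a) < ε / 2 :=
    hr₀ (1 + r) (by omega) s (by omega) a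
  have hdzb : dist (nds f (1 + r) s a) b < ε / 2 := by
    rw [← hsplit, hxz]
    exact hzb
  have hFb : F^[s] a ∈ B := by
    apply hball
    rw [Metric.mem_ball]
    calc dist (F^[s] a) b ≤ dist (F^[s] a) (nds f (1 + r) s a) + dist (nds f (1 + r) s a) b :=
          dist_triangle _ _ _
    _ < ε / 2 + ε / 2 := by rw [dist_comm] at hclose; exact add_lt_add hclose hdzb
    _ = ε := by ring
  refine ⟨m, hmpos, F^[s] a, ⟨a, haA, ?_⟩, hFb⟩
  rw [hm, Nat.mul_comm]


theorem totallyTransitive_densePeriodic_implies_weaklyMixing {X : Type*} [MetricSpace X]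
    [CompactSpace X]
    (f : ℕ → X → X) (F : X → X)
    (hcont : ∀ n : ℕ, 1 ≤ n → Continuous (f n))
    (hfo : FeebleOpen f)
    (hsurj : ∀ n : ℕ, 1 ≤ n → Function.Surjective (f n))
    (hF : Continuous F)
    (hunif : TendstoUniformly (fun n x => f n x) F Filter.atTop)
    (hcoll : CollectivelyConverges f F)
    (htt : NDSTotallyTransitive f) (hper : NDSDensePeriodicPoints f) :
    NDSWeaklyMixing f := by
  intro U₁ U₂ V₁ V₂ hU₁o hU₁ hU₂o hU₂ hV₁o hV₁ hV₂o hV₂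
  obtain ⟨v₁, hv₁⟩ := hV₁
  obtain ⟨v₂, hv₂⟩ := hV₂
  obtain ⟨ε₁, hε₁, hball₁⟩ := Metric.isOpen_iff.mp hV₁o v₁ hv₁
  obtain ⟨ε₂, hε₂, hball₂⟩ := Metric.isOpen_iff.mp hV₂o v₂ hv₂
  set ε : ℝ := min ε₁ ε₂ with hε_def
  have hε : 0 < ε := lt_min hε₁ hε₂
  obtain ⟨r₀, hr₀⟩ := hcoll (ε / 2) (by positivity)
  set r : ℕ := r₀ with hr_def
  -- the images of U₁, U₂ after time r have nonempty interior
  set W₁ : Set X := interior (nds f 1 r '' U₁) with hW₁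
  set W₂ : Set X := interior (nds f 1 r '' U₂) with hW₂
  have hW₁ne : W₁.Nonempty := nds_feeble hfo r U₁ hU₁o hU₁
  have hW₂ne : W₂.Nonempty := nds_feeble hfo r U₂ hU₂o hU₂
  -- Step 1: F-transitivity from W₂ to ball v₂ (ε/2)
  obtain ⟨a, ha, z, ⟨w, hwW₂, hwz⟩, hzball⟩ := F_totallyTransitive hcont hsurj hcoll htt
    1 one_pos W₂ (Metric.ball v₂ (ε / 2)) isOpen_interior hW₂ne Metric.isOpen_ball
    ⟨v₂, Metric.mem_ball_self (by positivity)⟩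
  rw [Nat.mul_one] at hwz
  -- A := W₂ ∩ F^[a]⁻¹(ball v₂ (ε/2)) is open nonempty
  set A : Set X := W₂ ∩ F^[a] ⁻¹' (Metric.ball v₂ (ε / 2)) with hA
  have hAo : IsOpen A := isOpen_interior.inter ((hF.iterate a).isOpen_preimage _ Metric.isOpen_ball)
  have hAne : A.Nonempty := ⟨w, hwW₂, by simp only [Set.mem_preimage]; rw [hwz]; exact hzball⟩
  -- periodic point p in A
  obtain ⟨p, ⟨k, hk, hpper⟩, hpA⟩ := hper.exists_mem_open hAo hAne
  have hpF : ∀ j : ℕ, 1 ≤ j → F^[k * j] p = p := periodic_transfer hcoll hk hpper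
  -- B₁ := F^[a]⁻¹(ball v₁ (ε/2)) is open nonempty
  set B₁ : Set X := F^[a] ⁻¹' (Metric.ball v₁ (ε / 2)) with hB₁
  have hB₁o : IsOpen B₁ := (hF.iterate a).isOpen_preimage _ Metric.isOpen_ball
  have hB₁ne : B₁.Nonempty := by
    obtain ⟨x, hx⟩ := ((F_surjective hsurj hF hcoll).iterate a) v₁
    exact ⟨x, by simp only [hB₁, Set.mem_preimage, hx]; exact Metric.mem_ball_self (by positivity)⟩
  -- Step 2: F-total transitivity with period k from W₁ to B₁
  obtain ⟨m, hm, y, ⟨x₁, hx₁W₁, hx₁y⟩, hyB₁⟩ := F_totallyTransitive hcont hsurj hcoll htt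
    k hk W₁ B₁ isOpen_interior hW₁ne hB₁o hB₁ne
  set N : ℕ := a + m * k with hN
  have hNpos : 0 < N := by omega
  -- F^[N] x₁ ∈ ball v₁ (ε/2)
  have hFx₁ : F^[N] x₁ ∈ Metric.ball v₁ (ε / 2) := by
    rw [hN, Function.iterate_add_apply, hx₁y]
    exact hyB₁
  -- F^[N] p ∈ ball v₂ (ε/2)
  have hFp : F^[N] p ∈ Metric.ball v₂ (ε / 2) := by
    rw [hN, Function.iterate_add_apply]
    have : F^[m * k] p = p := by rw [Nat.mul_comm]; exact hpF m hm
    rw [this]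
    exact hpA.2
  -- pull back x₁ and p to U₁ and U₂
  obtain ⟨u₁, hu₁, hu₁x⟩ := interior_subset hx₁W₁
  obtain ⟨u₂, hu₂, hu₂p⟩ := interior_subset hpA.1
  refine ⟨r + N, by omega, ?_, ?_⟩
  · refine ⟨nds f 1 (r + N) u₁, ⟨u₁, hu₁, rfl⟩, hball₁ ?_⟩
    have hsplit : nds f 1 (r + N) u₁ = nds f (1 + r) N x₁ := by
      rw [nds_add]; simp only [Function.comp_apply, hu₁x]
    have hclose : dist (nds f (1 + r) N x₁) (F^[N] x₁) < ε / 2 :=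
      hr₀ (1 + r) (by omega) N (by omega) x₁
    rw [Metric.mem_ball] at hFx₁ ⊢
    rw [hsplit]
    calc dist (nds f (1 + r) N x₁) v₁ ≤
        dist (nds f (1 + r) N x₁) (F^[N] x₁) + dist (F^[N] x₁) v₁ := dist_triangle _ _ _
    _ < ε / 2 + ε / 2 := add_lt_add hclose hFx₁
    _ = ε := by ring
    _ ≤ ε₁ := min_le_left _ _
  · refine ⟨nds f 1 (r + N) u₂, ⟨u₂, hu₂, rfl⟩, hball₂ ?_⟩
    have hsplit : nds f 1 (r + N) u₂ = nds f (1 + r) N p := by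
      rw [nds_add]; simp only [Function.comp_apply, hu₂p]
    have hclose : dist (nds f (1 + r) N p) (F^[N] p) < ε / 2 :=
      hr₀ (1 + r) (by omega) N (by omega) p
    rw [Metric.mem_ball] at hFp ⊢
    rw [hsplit]
    calc dist (nds f (1 + r) N p) v₂ ≤
        dist (nds f (1 + r) N p) (F^[N] p) + dist (F^[N] p) v₂ := dist_triangle _ _ _
    _ < ε / 2 + ε / 2 := add_lt_add hclose hFp
    _ = ε := by ring
    _ ≤ ε₂ := min_le_right _ _
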